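/- Positivity of relative entropy with equality case: if ζ₁ and ζ₂ are positive definite n×n complex matrices with tr(ζ₁) = tr(ζ₂), then S(ζ₁|ζ₂) ≥ 0, and S(ζ₁|ζ₂) = 0 if and only if ζ₁ = ζ₂. -/

import Mathlib

open Matrix Kronecker ComplexOrder

/-- Logarithm of a matrix, defined via the spectral theorem for Hermitian matrices
(junk value `0` on non-Hermitian matrices).  Since `Real.log 0 = 0`, for a positive
semidefinite matrix this is the logarithm taken on the support, with the convention
`log 0 = 0` on the kernel. -/
noncomputable def mlog {n : Type*} [Fintype n] [DecidableEq n] (A : Matrix n n ℂ) :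
    Matrix n n ℂ :=
  if hA : A.IsHermitian then
    (hA.eigenvectorUnitary : Matrix n n ℂ) *
      Matrix.diagonal (fun i => (Real.log (hA.eigenvalues i) : ℂ)) *
      (star hA.eigenvectorUnitary : Matrix n n ℂ)
  else 0

/-- von Neumann entropy `S(ρ) = -tr(ρ log ρ)`. -/
noncomputable def vnEnt {n : Type*} [Fintype n] [DecidableEq n] (ρ : Matrix n n ℂ) : ℝ :=
  -(Matrix.trace (ρ * mlog ρ)).re

/-- Relative entropy `S(ζ₁|ζ₂) = tr(ζ₁ (log ζ₁ - log ζ₂))`. -/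
noncomputable def relEnt {n : Type*} [Fintype n] [DecidableEq n] (ζ₁ ζ₂ : Matrix n n ℂ) : ℝ :=
  (Matrix.trace (ζ₁ * (mlog ζ₁ - mlog ζ₂))).re

/-- A density matrix: positive semidefinite with unit trace. -/
def IsDensityMatrix {n : Type*} [Fintype n] [DecidableEq n] (ρ : Matrix n n ℂ) : Prop :=
  ρ.PosSemidef ∧ ρ.trace = 1

/-- Partial trace over the reservoir (second) factor:
`(tr_R M)_{ij} = Σ_k M_{(i,k),(j,k)}`. -/
noncomputable def ptraceR {dS dR : ℕ} (M : Matrix (Fin dS × Fin dR) (Fin dS × Fin dR) ℂ) :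
    Matrix (Fin dS) (Fin dS) ℂ :=
  Matrix.of fun i j => ∑ k, M (i, k) (j, k)

/-- Partial trace over the system (first) factor:
`(tr_S M)_{kl} = Σ_i M_{(i,k),(i,l)}`. -/
noncomputable def ptraceS {dS dR : ℕ} (M : Matrix (Fin dS × Fin dR) (Fin dS × Fin dR) ℂ) :
    Matrix (Fin dR) (Fin dR) ℂ :=
  Matrix.of fun k l => ∑ i, M (i, k) (i, l)

/-- The Gibbs state `e^{-βH}/tr(e^{-βH})` at inverse temperature `β`. -/
noncomputable def gibbs {dR : ℕ} (β : ℝ) (H : Matrix (Fin dR) (Fin dR) ℂ) :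
    Matrix (Fin dR) (Fin dR) ℂ :=
  (Matrix.trace (NormedSpace.exp ((-β : ℂ) • H)))⁻¹ • NormedSpace.exp ((-β : ℂ) • H)

/-- The positive semidefinite square root of a positive semidefinite matrix (the definition of
`Matrix.PosSemidef.sqrt` in the older Mathlib, which no longer provides it). -/
noncomputable def Matrix.PosSemidef.sqrt {n 𝕜 : Type*} [Fintype n] [RCLike 𝕜] [DecidableEq n]
    {A : Matrix n n 𝕜} (hA : Matrix.PosSemidef A) : Matrix n n 𝕜 :=
  hA.1.eigenvectorUnitary.1 * Matrix.diagonal ((↑) ∘ (fun x : ℝ => Real.sqrt x) ∘ hA.1.eigenvalues) *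
    (star hA.1.eigenvectorUnitary : Matrix n n 𝕜)

/-- The trace norm `‖X‖₁ = tr((X*X)^{1/2})`. -/
noncomputable def traceNorm {n : Type*} [Fintype n] [DecidableEq n] (X : Matrix n n ℂ) : ℝ :=
  (Matrix.trace (Matrix.posSemidef_conjTranspose_mul_self X).sqrt).re

private lemma klein_scalar {x m : ℝ} (hx : 0 < x) (hm : 0 < m) :
    0 ≤ x * Real.log x - x * Real.log m - (x - m) ∧
    (x * Real.log x - x * Real.log m - (x - m) = 0 ↔ x = m) := by
  rcases eq_or_ne x m with h | h
  · subst h; simp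
  · have hne : m / x ≠ 1 := by
      intro hc
      exact h (by field_simp at hc; linarith)
    have h1 : Real.log (m / x) < m / x - 1 :=
      Real.log_lt_sub_one_of_pos (div_pos hm hx) hne
    rw [Real.log_div hm.ne' hx.ne'] at h1
    have h2 : x * (m / x) = m := by field_simp
    have h3 : x * (Real.log m - Real.log x) < x * (m / x - 1) :=
      mul_lt_mul_of_pos_left h1 hx
    constructor
    · nlinarith
    · constructor
      · intro he; nlinarith
      · intro he; exact absurd he h

private lemma trace_conj_unitary {n : ℕ} (U : Matrix.unitaryGroup (Fin n) ℂ)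
    (M : Matrix (Fin n) (Fin n) ℂ) :
    Matrix.trace ((U : Matrix (Fin n) (Fin n) ℂ) * M *
      star (U : Matrix (Fin n) (Fin n) ℂ)) = Matrix.trace M := by
  rw [Matrix.trace_mul_cycle,
    show star (U : Matrix (Fin n) (Fin n) ℂ) * (U : Matrix (Fin n) (Fin n) ℂ) = 1 from U.prop.1,
    one_mul]

private lemma trace_mul_mlog_re {n : ℕ} {A B : Matrix (Fin n) (Fin n) ℂ}
    (hA : A.IsHermitian) (hB : B.IsHermitian) :
    (Matrix.trace (A * mlog B)).re =
      ∑ i, ∑ j, hA.eigenvalues i *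
        Complex.normSq ((star (hA.eigenvectorUnitary : Matrix (Fin n) (Fin n) ℂ) *
          (hB.eigenvectorUnitary : Matrix (Fin n) (Fin n) ℂ)) i j) *
        Real.log (hB.eigenvalues j) := by
  set U := (hA.eigenvectorUnitary : Matrix (Fin n) (Fin n) ℂ) with hUdef
  set V := (hB.eigenvectorUnitary : Matrix (Fin n) (Fin n) ℂ) with hVdef
  set W := star U * V with hWdef
  set L := Matrix.diagonal (fun j => ((Real.log (hB.eigenvalues j) : ℝ) : ℂ)) with hL
  have hUU : U * star U = 1 := hA.eigenvectorUnitary.prop.2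
  have hcan : ∀ X : Matrix (Fin n) (Fin n) ℂ, star U * (U * X) = X := fun X => by
    rw [← mul_assoc, hA.eigenvectorUnitary.prop.1, one_mul]
  have hVW : V = U * W := by
    rw [hWdef, ← mul_assoc, hUU, one_mul]
  have hmB : mlog B = V * L * star V := by rw [mlog, dif_pos hB]
  have hkey : A * mlog B =
      U * (Matrix.diagonal (fun i => ((hA.eigenvalues i : ℝ) : ℂ)) * (W * (L * star W))) *
        star U := by
    conv_lhs => rw [hA.spectral_theorem, Unitary.conjStarAlgAut_apply, hmB, hVW]
    rw [Matrix.star_mul, ← hUdef]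
    simp only [mul_assoc, hcan]
    rfl
  rw [hkey, trace_conj_unitary, Matrix.trace, Complex.re_sum]
  refine Finset.sum_congr rfl fun i _ => ?_
  rw [Matrix.diag_apply, Matrix.diagonal_mul, Matrix.mul_apply, Finset.mul_sum, Complex.re_sum]
  refine Finset.sum_congr rfl fun j _ => ?_
  rw [Matrix.diagonal_mul, Matrix.star_apply]
  simp only [Complex.mul_re, Complex.mul_im, Complex.normSq_apply, Complex.ofReal_re,
    Complex.ofReal_im, Complex.star_def, Complex.conj_re, Complex.conj_im]
  ring

private lemma trace_re_eq_sum {n : ℕ} {A : Matrix (Fin n) (Fin n) ℂ} (hA : A.IsHermitian) :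
    (Matrix.trace A).re = ∑ i, hA.eigenvalues i := by
  conv_lhs => rw [hA.spectral_theorem, Unitary.conjStarAlgAut_apply]
  rw [trace_conj_unitary, Matrix.trace_diagonal, Complex.re_sum]
  simp [Function.comp]

private lemma normSq_rowsum {n : ℕ} {W : Matrix (Fin n) (Fin n) ℂ} (h : W * star W = 1)
    (i : Fin n) : ∑ j, Complex.normSq (W i j) = 1 := by
  have h1 : (W * star W) i i = (1 : Matrix (Fin n) (Fin n) ℂ) i i := by rw [h]
  rw [Matrix.mul_apply, Matrix.one_apply_eq] at h1
  have h2 : ((∑ j, Complex.normSq (W i j) : ℝ) : ℂ) = 1 := by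
    push_cast
    rw [← h1]
    refine Finset.sum_congr rfl fun j _ => ?_
    rw [Matrix.star_apply, Complex.star_def, Complex.mul_conj]
  exact_mod_cast h2

private lemma normSq_colsum {n : ℕ} {W : Matrix (Fin n) (Fin n) ℂ} (h : star W * W = 1)
    (j : Fin n) : ∑ i, Complex.normSq (W i j) = 1 := by
  have h1 : (star W * W) j j = (1 : Matrix (Fin n) (Fin n) ℂ) j j := by rw [h]
  rw [Matrix.mul_apply, Matrix.one_apply_eq] at h1
  have h2 : ((∑ i, Complex.normSq (W i j) : ℝ) : ℂ) = 1 := by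
    push_cast
    rw [← h1]
    refine Finset.sum_congr rfl fun i _ => ?_
    rw [Matrix.star_apply, Complex.star_def, mul_comm, Complex.mul_conj]
  exact_mod_cast h2


/-- **Positivity of relative entropy with equality case.**
If `ζ₁` and `ζ₂` are positive definite matrices with equal traces, then
`S(ζ₁|ζ₂) ≥ 0`, and `S(ζ₁|ζ₂) = 0` iff `ζ₁ = ζ₂`. -/
theorem relEnt_nonneg_and_eq_zero_iff {n : ℕ}
    (ζ₁ ζ₂ : Matrix (Fin n) (Fin n) ℂ)
    (h₁ : ζ₁.PosDef) (h₂ : ζ₂.PosDef) (htr : ζ₁.trace = ζ₂.trace) :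
    0 ≤ relEnt ζ₁ ζ₂ ∧ (relEnt ζ₁ ζ₂ = 0 ↔ ζ₁ = ζ₂) := by
  show 0 ≤ (Matrix.trace (ζ₁ * (mlog ζ₁ - mlog ζ₂))).re ∧
      ((Matrix.trace (ζ₁ * (mlog ζ₁ - mlog ζ₂))).re = 0 ↔ ζ₁ = ζ₂)
  have hA : ζ₁.IsHermitian := h₁.1
  have hB : ζ₂.IsHermitian := h₂.1
  set lam := hA.eigenvalues with hlam
  set mu := hB.eigenvalues with hmu
  set U := (hA.eigenvectorUnitary : Matrix (Fin n) (Fin n) ℂ) with hUdef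
  set V := (hB.eigenvectorUnitary : Matrix (Fin n) (Fin n) ℂ) with hVdef
  set W := star U * V with hWdef
  have hlpos : ∀ i, 0 < lam i := fun i => h₁.eigenvalues_pos i
  have hmpos : ∀ j, 0 < mu j := fun j => h₂.eigenvalues_pos j
  have hUU : star U * U = 1 := hA.eigenvectorUnitary.prop.1
  have hUU' : U * star U = 1 := hA.eigenvectorUnitary.prop.2
  have hVV : star V * V = 1 := hB.eigenvectorUnitary.prop.1
  have hVV' : V * star V = 1 := hB.eigenvectorUnitary.prop.2
  have hWW : W * star W = 1 := by
    have : W * star W = star U * (V * star V) * U := by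
      rw [hWdef, Matrix.star_mul, star_star]; simp only [mul_assoc]
    rw [this, hVV', mul_one, hUU]
  have hWW' : star W * W = 1 := by
    have : star W * W = star V * (U * star U) * V := by
      rw [hWdef, Matrix.star_mul, star_star]; simp only [mul_assoc]
    rw [this, hUU', mul_one, hVV]
  have hrow := normSq_rowsum hWW
  have hcol := normSq_colsum hWW'
  -- the two trace terms
  have h11 : (Matrix.trace (ζ₁ * mlog ζ₁)).re = ∑ i, lam i * Real.log (lam i) := by
    rw [trace_mul_mlog_re hA hA, ← hUdef, ← hlam, hUU]
    refine Finset.sum_congr rfl fun i _ => ?_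
    rw [Finset.sum_eq_single i]
    · simp
    · intro j _ hj
      simp [Matrix.one_apply_ne (Ne.symm hj)]
    · intro h; exact absurd (Finset.mem_univ i) h
  have h12 : (Matrix.trace (ζ₁ * mlog ζ₂)).re =
      ∑ i, ∑ j, lam i * Complex.normSq (W i j) * Real.log (mu j) := by
    rw [trace_mul_mlog_re hA hB, ← hUdef, ← hVdef, ← hWdef, ← hlam, ← hmu]
  have e4 : ∑ i, lam i = ∑ j, mu j := by
    have h5 := congrArg Complex.re htr
    rwa [trace_re_eq_sum hA, trace_re_eq_sum hB, ← hlam, ← hmu] at h5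
  -- key decomposition
  have key : (Matrix.trace (ζ₁ * (mlog ζ₁ - mlog ζ₂))).re =
      ∑ i, ∑ j, Complex.normSq (W i j) *
        (lam i * Real.log (lam i) - lam i * Real.log (mu j) - (lam i - mu j)) := by
    have e0 : (Matrix.trace (ζ₁ * (mlog ζ₁ - mlog ζ₂))).re =
        (Matrix.trace (ζ₁ * mlog ζ₁)).re - (Matrix.trace (ζ₁ * mlog ζ₂)).re := by
      rw [mul_sub, Matrix.trace_sub, Complex.sub_re]
    rw [e0, h11, h12]
    have e1 : ∑ i, ∑ j, Complex.normSq (W i j) * (lam i * Real.log (lam i)) =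
        ∑ i, lam i * Real.log (lam i) := by
      refine Finset.sum_congr rfl fun i _ => ?_
      rw [← Finset.sum_mul, hrow i, one_mul]
    have e2 : ∑ i, ∑ j, Complex.normSq (W i j) * lam i = ∑ i, lam i := by
      refine Finset.sum_congr rfl fun i _ => ?_
      rw [← Finset.sum_mul, hrow i, one_mul]
    have e3 : ∑ i, ∑ j, Complex.normSq (W i j) * mu j = ∑ j, mu j := by
      rw [Finset.sum_comm]
      refine Finset.sum_congr rfl fun j _ => ?_
      rw [← Finset.sum_mul, hcol j, one_mul]
    have e5 : ∑ i, ∑ j, lam i * Complex.normSq (W i j) * Real.log (mu j) =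
        ∑ i, ∑ j, Complex.normSq (W i j) * (lam i * Real.log (mu j)) := by
      refine Finset.sum_congr rfl fun i _ => Finset.sum_congr rfl fun j _ => by ring
    simp only [mul_sub, Finset.sum_sub_distrib]
    rw [e1, e2, e3, e5]
    linarith [e4]
  have hterm : ∀ i j, 0 ≤ Complex.normSq (W i j) *
      (lam i * Real.log (lam i) - lam i * Real.log (mu j) - (lam i - mu j)) := fun i j =>
    mul_nonneg (Complex.normSq_nonneg _) (klein_scalar (hlpos i) (hmpos j)).1
  have hnonneg : 0 ≤ (Matrix.trace (ζ₁ * (mlog ζ₁ - mlog ζ₂))).re := by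
    rw [key]
    exact Finset.sum_nonneg fun i _ => Finset.sum_nonneg fun j _ => hterm i j
  refine ⟨hnonneg, ?_, ?_⟩
  · -- equality implies ζ₁ = ζ₂
    intro h0
    rw [key] at h0
    have hall : ∀ i j, Complex.normSq (W i j) *
        (lam i * Real.log (lam i) - lam i * Real.log (mu j) - (lam i - mu j)) = 0 := by
      have houter := (Finset.sum_eq_zero_iff_of_nonneg
        (fun i _ => Finset.sum_nonneg fun j _ => hterm i j)).1 h0
      intro i j
      exact (Finset.sum_eq_zero_iff_of_nonneg (fun j _ => hterm i j)).1
        (houter i (Finset.mem_univ i)) j (Finset.mem_univ j)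
    have heq : ∀ i j, W i j ≠ 0 → lam i = mu j := by
      intro i j hw
      rcases mul_eq_zero.1 (hall i j) with h | h
      · exact absurd (Complex.normSq_eq_zero.1 h) hw
      · exact (klein_scalar (hlpos i) (hmpos j)).2.1 h
    have hDW : Matrix.diagonal (RCLike.ofReal ∘ lam) * W =
        W * Matrix.diagonal (RCLike.ofReal ∘ mu) := by
      ext i j
      rw [Matrix.diagonal_mul, Matrix.mul_diagonal]
      by_cases hw : W i j = 0
      · rw [hw, mul_zero, zero_mul]
      · simp only [Function.comp_apply]
        rw [heq i j hw, mul_comm]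
    have hVW : V = U * W := by rw [hWdef, ← mul_assoc, hUU', one_mul]
    have hmid : W * Matrix.diagonal (RCLike.ofReal ∘ mu) * star W =
        Matrix.diagonal (RCLike.ofReal ∘ lam) := by
      rw [← hDW, mul_assoc, hWW, mul_one]
    conv_lhs => rw [hA.spectral_theorem, Unitary.conjStarAlgAut_apply]
    conv_rhs => rw [hB.spectral_theorem, Unitary.conjStarAlgAut_apply]
    rw [← hUdef, ← hVdef, ← hlam, ← hmu, hVW, Matrix.star_mul]
    have hassoc : U * W * Matrix.diagonal (RCLike.ofReal ∘ mu) * (star W * star U) =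
        U * (W * Matrix.diagonal (RCLike.ofReal ∘ mu) * star W) * star U := by
      simp only [mul_assoc]
    rw [hassoc, hmid]
  · -- ζ₁ = ζ₂ implies equality
    intro h
    rw [h, sub_self, mul_zero, Matrix.trace_zero, Complex.zero_re]
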